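/- The quantity Q(x,y) = (x-y)² - x - y is invariant under both L' and L''; that is, Q(L'(x,y)) = Q(x,y) and Q(L''(x,y)) = Q(x,y) for all (x,y) ∈ ℤ². Consequently, every point obtained from P by iterated applications of L' and L'' lies on the same parabola x + y + 2m = (x-y)², where -2m = Q(P). -/

import Mathlib

def Lp : ℤ × ℤ → ℤ × ℤ := fun p => (-p.1 + 2*p.2 + 1, p.2)
def Lpp : ℤ × ℤ → ℤ × ℤ := fun p => (p.1, 2*p.1 - p.2 + 1)
def Mr : ℤ × ℤ → ℤ × ℤ := fun p => (p.1 + 1, p.2)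
def Ml : ℤ × ℤ → ℤ × ℤ := fun p => (p.1 - 1, p.2)
def Mu : ℤ × ℤ → ℤ × ℤ := fun p => (p.1, p.2 + 1)
def Md : ℤ × ℤ → ℤ × ℤ := fun p => (p.1, p.2 - 1)

def ops : Set ((ℤ × ℤ) → (ℤ × ℤ)) := {Lp, Lpp, Mr, Ml, Mu, Md}

/-- The parabolic-taxicab distance: minimal number of operators from `ops`
needed to map `P` to `Q`. -/
noncomputable def dpc (P Q : ℤ × ℤ) : ℕ :=
  sInf {n | ∃ l : List ((ℤ × ℤ) → (ℤ × ℤ)), l.length = n ∧ (∀ f ∈ l, f ∈ ops) ∧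
    l.foldr (fun f p => f p) P = Q}

def Qf : ℤ × ℤ → ℤ := fun p => (p.1 - p.2)^2 - p.1 - p.2

theorem Qf_invariant :
    (∀ p : ℤ × ℤ, Qf (Lp p) = Qf p) ∧
    (∀ p : ℤ × ℤ, Qf (Lpp p) = Qf p) ∧
    (∀ (P : ℤ × ℤ) (l : List ((ℤ × ℤ) → (ℤ × ℤ))),
      (∀ f ∈ l, f = Lp ∨ f = Lpp) →
      Qf (l.foldr (fun f p => f p) P) = Qf P) := by
  have h1 : ∀ p : ℤ × ℤ, Qf (Lp p) = Qf p := by intro p; simp [Qf, Lp]; ring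
  have h2 : ∀ p : ℤ × ℤ, Qf (Lpp p) = Qf p := by intro p; simp [Qf, Lpp]; ring
  refine ⟨h1, h2, ?_⟩
  intro P l hl
  induction l with
  | nil => rfl
  | cons f t ih =>
    simp only [List.foldr_cons]
    rcases hl f List.mem_cons_self with h | h <;> subst h
    · rw [h1]; exact ih fun g hg => hl g (List.mem_cons_of_mem _ hg)
    · rw [h2]; exact ih fun g hg => hl g (List.mem_cons_of_mem _ hg)
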